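/- For all nonnegative real numbers a, b and every σ > 0, there exists a constant c > 0 depending only on σ such that (a - b)(a^σ - b^σ) ≥ c·|a^{(σ+1)/2} - b^{(σ+1)/2}|². -/

import Mathlib

/-- Key lemma: for `0 < q ≤ 1` and `0 ≤ y ≤ x`,
`q * (x - y)^2 ≤ (x^q - y^q) * (x^(2-q) - y^(2-q))`. -/
lemma key_ineq {q x y : ℝ} (hq0 : 0 < q) (hq1 : q ≤ 1) (hy : 0 ≤ y) (hxy : y ≤ x) :
    q * (x - y) ^ 2 ≤ (x ^ q - y ^ q) * (x ^ (2 - q) - y ^ (2 - q)) := by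
  have hx : 0 ≤ x := hy.trans hxy
  rcases eq_or_lt_of_le hx with h | hx
  · have hx0 : x = 0 := h.symm
    have hy0 : y = 0 := le_antisymm (hxy.trans_eq hx0) hy
    subst hx0; subst hy0
    simp [Real.zero_rpow hq0.ne']
  · set t := y / x with ht
    have ht0 : 0 ≤ t := div_nonneg hy hx.le
    have ht1 : t ≤ 1 := (div_le_one hx).mpr hxy
    have hyx : y = t * x := by rw [ht, div_mul_cancel₀ y hx.ne']
    have h1 : t ^ q ≤ 1 + q * (t - 1) := by
      have := rpow_one_add_le_one_add_mul_self (s := t - 1) (by linarith) hq0.le hq1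
      simpa using this
    have h2 : t ^ (2 - q) ≤ t := by
      rcases eq_or_lt_of_le ht0 with h0 | h0
      · rw [← h0, Real.zero_rpow (by linarith)]
      · calc t ^ (2 - q) ≤ t ^ (1 : ℝ) :=
              Real.rpow_le_rpow_of_exponent_ge h0 ht1 (by linarith)
          _ = t := Real.rpow_one t
    have e1 : x ^ q - y ^ q = x ^ q * (1 - t ^ q) := by
      rw [hyx, Real.mul_rpow ht0 hx.le]; ring
    have e2 : x ^ (2 - q) - y ^ (2 - q) = x ^ (2 - q) * (1 - t ^ (2 - q)) := by
      rw [hyx, Real.mul_rpow ht0 hx.le]; ring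
    have hb1 : x ^ q * (q * (1 - t)) ≤ x ^ q - y ^ q := by
      rw [e1]
      apply mul_le_mul_of_nonneg_left (by nlinarith) (Real.rpow_nonneg hx.le q)
    have hb2 : x ^ (2 - q) * (1 - t) ≤ x ^ (2 - q) - y ^ (2 - q) := by
      rw [e2]
      apply mul_le_mul_of_nonneg_left (by linarith) (Real.rpow_nonneg hx.le (2 - q))
    have hnn1 : 0 ≤ x ^ q * (q * (1 - t)) := by
      apply mul_nonneg (Real.rpow_nonneg hx.le q)
      apply mul_nonneg hq0.le; linarith
    have hnn2 : 0 ≤ x ^ (2 - q) * (1 - t) := by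
      apply mul_nonneg (Real.rpow_nonneg hx.le (2 - q)); linarith
    have hprod : (x ^ q * (q * (1 - t))) * (x ^ (2 - q) * (1 - t)) ≤
        (x ^ q - y ^ q) * (x ^ (2 - q) - y ^ (2 - q)) :=
      mul_le_mul hb1 hb2 hnn2 (le_trans hnn1 hb1)
    have hxx : x ^ q * x ^ (2 - q) = x ^ 2 := by
      rw [← Real.rpow_add hx]
      norm_num
    have hlhs : (x ^ q * (q * (1 - t))) * (x ^ (2 - q) * (1 - t)) = q * (x - y) ^ 2 := by
      have : x - y = x * (1 - t) := by rw [hyx]; ring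
      rw [this]
      calc (x ^ q * (q * (1 - t))) * (x ^ (2 - q) * (1 - t))
          = (x ^ q * x ^ (2 - q)) * (q * (1 - t) ^ 2) := by ring
        _ = x ^ 2 * (q * (1 - t) ^ 2) := by rw [hxx]
        _ = q * (x * (1 - t)) ^ 2 := by ring
    linarith [hprod, hlhs ▸ hprod]

lemma main_half (σ : ℝ) (hσ : 0 < σ) (a b : ℝ) (ha : 0 ≤ a) (hb : 0 ≤ b) (hab : b ≤ a) :
    min (2 / (σ + 1)) (2 * σ / (σ + 1)) * |a ^ ((σ + 1) / 2) - b ^ ((σ + 1) / 2)| ^ 2 ≤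
      (a - b) * (a ^ σ - b ^ σ) := by
  set p := (σ + 1) / 2 with hp
  have hp0 : 0 < p := by rw [hp]; linarith
  set x := a ^ p with hx
  set y := b ^ p with hy
  have hxy : y ≤ x := Real.rpow_le_rpow hb hab hp0.le
  have hy0 : 0 ≤ y := Real.rpow_nonneg hb p
  have habs : |x - y| ^ 2 = (x - y) ^ 2 := sq_abs _
  have hxq : ∀ r : ℝ, p * r = 1 → x ^ r = a := by
    intro r hr
    rw [hx, ← Real.rpow_mul ha, hr, Real.rpow_one]
  have hxqσ : ∀ r : ℝ, p * r = σ → x ^ r = a ^ σ := by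
    intro r hr
    rw [hx, ← Real.rpow_mul ha, hr]
  have hyq : ∀ r : ℝ, p * r = 1 → y ^ r = b := by
    intro r hr
    rw [hy, ← Real.rpow_mul hb, hr, Real.rpow_one]
  have hyqσ : ∀ r : ℝ, p * r = σ → y ^ r = b ^ σ := by
    intro r hr
    rw [hy, ← Real.rpow_mul hb, hr]
  have hσ1 : σ + 1 ≠ 0 := by linarith
  rcases le_total σ 1 with hcase | hcase
  · -- σ ≤ 1 : use q = 2σ/(σ+1) ≤ 1, 2 - q = 2/(σ+1)
    set q := 2 * σ / (σ + 1) with hq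
    have hq0 : 0 < q := by positivity
    have hq1 : q ≤ 1 := by rw [hq, div_le_one (by linarith)]; linarith
    have h2q : 2 - q = 2 / (σ + 1) := by rw [hq]; field_simp; ring
    have key := key_ineq hq0 hq1 hy0 hxy
    have e1 : x ^ q = a ^ σ := hxqσ q (by rw [hq, hp]; field_simp)
    have e2 : y ^ q = b ^ σ := hyqσ q (by rw [hq, hp]; field_simp)
    have e3 : x ^ (2 - q) = a := hxq (2 - q) (by rw [h2q, hp]; field_simp)
    have e4 : y ^ (2 - q) = b := hyq (2 - q) (by rw [h2q, hp]; field_simp)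
    rw [e1, e2, e3, e4] at key
    rw [habs]
    calc min (2 / (σ + 1)) (2 * σ / (σ + 1)) * (x - y) ^ 2
        ≤ q * (x - y) ^ 2 := by
          apply mul_le_mul_of_nonneg_right (min_le_right _ _) (sq_nonneg _)
      _ ≤ (a ^ σ - b ^ σ) * (a - b) := key
      _ = (a - b) * (a ^ σ - b ^ σ) := mul_comm _ _
  · -- 1 ≤ σ : use q = 2/(σ+1) ≤ 1, 2 - q = 2σ/(σ+1)
    set q := 2 / (σ + 1) with hq
    have hq0 : 0 < q := by positivity
    have hq1 : q ≤ 1 := by rw [hq, div_le_one (by linarith)]; linarith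
    have h2q : 2 - q = 2 * σ / (σ + 1) := by rw [hq]; field_simp; ring
    have key := key_ineq hq0 hq1 hy0 hxy
    have e1 : x ^ q = a := hxq q (by rw [hq, hp]; field_simp)
    have e2 : y ^ q = b := hyq q (by rw [hq, hp]; field_simp)
    have e3 : x ^ (2 - q) = a ^ σ := hxqσ (2 - q) (by rw [h2q, hp]; field_simp)
    have e4 : y ^ (2 - q) = b ^ σ := hyqσ (2 - q) (by rw [h2q, hp]; field_simp)
    rw [e1, e2, e3, e4] at key
    rw [habs]
    calc min (2 / (σ + 1)) (2 * σ / (σ + 1)) * (x - y) ^ 2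
        ≤ q * (x - y) ^ 2 := by
          apply mul_le_mul_of_nonneg_right (min_le_left _ _) (sq_nonneg _)
      _ ≤ (a - b) * (a ^ σ - b ^ σ) := key

theorem stmt_0 (σ : ℝ) (hσ : 0 < σ) :
    ∃ c : ℝ, 0 < c ∧ ∀ a b : ℝ, 0 ≤ a → 0 ≤ b →
      c * |a ^ ((σ + 1) / 2) - b ^ ((σ + 1) / 2)| ^ 2 ≤ (a - b) * (a ^ σ - b ^ σ) := by
  refine ⟨min (2 / (σ + 1)) (2 * σ / (σ + 1)), lt_min (by positivity) (by positivity), ?_⟩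
  intro a b ha hb
  rcases le_total b a with hab | hab
  · exact main_half σ hσ a b ha hb hab
  · have := main_half σ hσ b a hb ha hab
    rw [abs_sub_comm] at this
    calc min (2 / (σ + 1)) (2 * σ / (σ + 1)) * |a ^ ((σ + 1) / 2) - b ^ ((σ + 1) / 2)| ^ 2
        ≤ (b - a) * (b ^ σ - a ^ σ) := this
      _ = (a - b) * (a ^ σ - b ^ σ) := by ring
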